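/- Trigonometric identity: for n ≥ 2 and k = 1,…,n, (2/(n+1)) sin²(kπ/(n+1)) = ∏_{j=1}^{n-1} (cos(kπ/(n+1)) - cos(jπ/n)) / ∏_{j=1, j≠k}^{n} (cos(kπ/(n+1)) - cos(jπ/(n+1))). -/

import Mathlib

open Real Finset Filter Topology Polynomial

lemma roots_prod (n : ℕ) (ζ : ℂ) (hζ : IsPrimitiveRoot ζ n) (hn : 0 < n) (z : ℂ) :
    z ^ n - 1 = ∏ i ∈ Finset.range n, (z - ζ ^ i) := by
  have := X_pow_sub_C_eq_prod hζ hn (one_pow n)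
  have h2 := congrArg (Polynomial.eval z) this
  simpa [Polynomial.eval_prod] using h2

lemma prim (m : ℕ) (hm : m ≠ 0) : IsPrimitiveRoot (Complex.exp (π * Complex.I / m)) (2*m) := by
  have := Complex.isPrimitiveRoot_exp (2*m) (by positivity)
  convert this using 2
  push_cast
  rw [mul_comm]
  ring_nf

lemma pairing {M : Type*} [CommMonoid M] (m : ℕ) (hm : 1 ≤ m) (f : ℕ → M) :
    ∏ j ∈ Finset.range (2*m), f j
      = f 0 * f m * ∏ j ∈ Finset.Icc 1 (m-1), (f j * f (2*m - j)) := by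
  have h1 : Finset.range m = insert 0 (Finset.Icc 1 (m-1)) := by
    ext x; simp [Finset.mem_range, Finset.mem_Icc]; omega
  have h0 : (0:ℕ) ∉ Finset.Icc 1 (m-1) := by simp
  rw [two_mul, Finset.prod_range_add, h1, Finset.prod_insert h0, Finset.prod_insert h0,
    Finset.prod_mul_distrib]
  have h2 : ∏ i ∈ Finset.Icc 1 (m-1), f (m + i) = ∏ j ∈ Finset.Icc 1 (m-1), f (2*m - j) := by
    apply Finset.prod_nbij' (fun i => m - i) (fun j => m - j)
    all_goals intro a ha; simp [Finset.mem_Icc] at *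
    · omega
    · omega
    · omega
    · omega
    · congr 1; omega
  rw [h2]
  simp only [Nat.add_zero, two_mul]
  exact mul_mul_mul_comm (f 0) _ (f m) _

lemma prodA (m : ℕ) (hm : 1 ≤ m) (z : ℂ) :
    z ^ (2*m) - 1 = (z^2 - 1) *
      ∏ j ∈ Finset.Icc 1 (m-1), (z^2 - 2 * Complex.cos (j*π/m) * z + 1) := by
  have hm0 : (m:ℂ) ≠ 0 := Nat.cast_ne_zero.mpr (by omega)
  set ζ := Complex.exp (π * Complex.I / m) with hζdef
  have hζ := prim m (by omega)
  have hζm : ζ ^ m = -1 := by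
    rw [hζdef, ← Complex.exp_nat_mul]
    have h : (m:ℂ) * (π * Complex.I / m) = π * Complex.I := by field_simp
    rw [h, Complex.exp_pi_mul_I]
  rw [roots_prod (2*m) ζ hζ (by omega) z, pairing m hm]
  have h0m : (z - ζ ^ 0) * (z - ζ ^ m) = z^2 - 1 := by
    rw [pow_zero, hζm]; ring
  rw [h0m]
  congr 1
  apply Finset.prod_congr rfl
  intro j hj
  simp only [Finset.mem_Icc] at hj
  have hinv : ζ ^ j * ζ ^ (2*m - j) = 1 := by
    rw [← pow_add]
    have h : j + (2*m - j) = 2*m := by omega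
    rw [h, hζ.pow_eq_one]
  have hj1 : ζ ^ j = Complex.exp ((j*π/m : ℝ) * Complex.I) := by
    rw [hζdef, ← Complex.exp_nat_mul]
    congr 1
    push_cast
    ring
  have hsum : ζ ^ j + ζ ^ (2*m - j) = 2 * Complex.cos (j*π/m) := by
    have hj2 : ζ ^ (2*m - j) = Complex.exp (-((j*π/m : ℝ) * Complex.I)) := by
      rw [Complex.exp_neg, ← hj1]
      exact eq_inv_of_mul_eq_one_right hinv
    rw [hj1, hj2, Complex.cos]
    push_cast
    ring
  calc (z - ζ^j) * (z - ζ^(2*m - j))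
      = z^2 - (ζ^j + ζ^(2*m-j)) * z + ζ^j * ζ^(2*m-j) := by ring
    _ = _ := by rw [hinv, hsum]

lemma prodB (m : ℕ) (hm : 1 ≤ m) (θ : ℝ) :
    (2:ℝ)^(m-1) * (∏ j ∈ Finset.Icc 1 (m-1), (Real.cos θ - Real.cos (j*π/m))) * Real.sin θ
      = Real.sin (m*θ) := by
  have key := prodA m hm (Complex.exp (θ * Complex.I))
  set z := Complex.exp (θ * Complex.I) with hzdef
  have hz : z ≠ 0 := Complex.exp_ne_zero _
  have hsin : ∀ x : ℝ, Complex.exp ((x:ℂ) * Complex.I) ^ 2 - 1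
      = Complex.exp ((x:ℂ) * Complex.I) * (2 * Complex.I * Complex.sin x) := by
    intro x
    rw [Complex.sin]
    simp only [neg_mul, Complex.exp_neg, sq]
    have h := Complex.exp_ne_zero ((x:ℂ) * Complex.I)
    field_simp
    linear_combination (Complex.exp ((x:ℂ)*Complex.I)^2 - 1) * Complex.I_sq
  have hzm : z ^ (2*m) - 1 = z ^ m * (2 * Complex.I * Complex.sin ((m*θ : ℝ))) := by
    have h1 : z ^ m = Complex.exp (((m*θ : ℝ):ℂ) * Complex.I) := by
      rw [hzdef, ← Complex.exp_nat_mul]; push_cast; ring_nf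
    have h2 : z^(2*m) = (z^m)^2 := by rw [← pow_mul]; ring_nf
    rw [h2, h1, hsin (m*θ)]
  have hfac : ∀ j : ℕ, z^2 - 2 * Complex.cos (((j*π/m:ℝ):ℂ)) * z + 1
      = z * (2 * (Complex.cos ((θ:ℝ):ℂ) - Complex.cos ((j*π/m : ℝ):ℂ))) := by
    intro j
    simp only [Complex.cos, hzdef, neg_mul, Complex.exp_neg, sq]
    have h1 := Complex.exp_ne_zero ((θ:ℂ) * Complex.I)
    have h2 := Complex.exp_ne_zero (((j*π/m : ℝ):ℂ) * Complex.I)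
    field_simp
    ring
  have hcast : ∀ j : ℕ, ((j:ℂ)*(π:ℂ)/(m:ℂ)) = (((j*π/m : ℝ)):ℂ) := by
    intro j; push_cast; ring
  simp only [hcast] at key
  rw [hzm, Finset.prod_congr rfl (fun j _ => hfac j), hsin θ,
    Finset.prod_mul_distrib, Finset.prod_mul_distrib,
    Finset.prod_const, Finset.prod_const, Nat.card_Icc] at key
  have hcard : m - 1 + 1 - 1 = m - 1 := by omega
  rw [hcard] at key
  have hzm0 : z ^ m * (2 * Complex.I) ≠ 0 := by
    apply mul_ne_zero (pow_ne_zero _ hz)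
    simp [Complex.I_ne_zero]
  have hzz : z * z^(m-1) = z^m := by
    rw [← pow_succ']
    congr 1
    omega
  have main : ((2:ℝ)^(m-1) * (∏ j ∈ Finset.Icc 1 (m-1),
        (Real.cos θ - Real.cos (j*π/m))) * Real.sin θ : ℝ) = ((Real.sin (m*θ) : ℝ) : ℂ) := by
    push_cast [Complex.ofReal_sin, Complex.ofReal_cos, ← hcast]
    apply mul_left_cancel₀ hzm0
    have e1 : z^m*(2*Complex.I) * Complex.sin ((m:ℂ)*(θ:ℂ)) =
        z^m * (2*Complex.I*Complex.sin (((m*θ:ℝ)):ℂ)) := by push_cast; ring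
    rw [e1, key, ← hzz]
    push_cast [← hcast]
    ring
  exact_mod_cast main

lemma quot_helper (a b d : ℝ) (hd : d ≠ 0) : (a/d)/(b/d) = a/b := by
  rcases eq_or_ne b 0 with hb | hb
  · simp [hb]
  · field_simp

lemma denomF (n k : ℕ) (hn : 2 ≤ n) (hk1 : 1 ≤ k) (hk2 : k ≤ n) :
    (∏ j ∈ (Finset.Icc 1 n).erase k,
        (Real.cos (k * π / (n + 1)) - Real.cos (j * π / (n + 1))))
      = ((n:ℝ)+1) * (-1)^(k+1) / (2^n * Real.sin (k * π / (n+1)) ^ 2) := by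
  have hπ := Real.pi_pos
  set θk : ℝ := k * π / (n + 1) with hθkdef
  have hn1 : (0:ℝ) < (n:ℝ) + 1 := by positivity
  have hθk0 : 0 < θk := by
    apply div_pos _ hn1
    have : (0:ℝ) < (k:ℝ) := by exact_mod_cast hk1
    positivity
  have hθkπ : θk < π := by
    rw [hθkdef, div_lt_iff₀ hn1]
    have hkn : (k:ℝ) < (n:ℝ) + 1 := by
      have : (k:ℝ) ≤ (n:ℝ) := by exact_mod_cast hk2
      linarith
    nlinarith
  have hsθk : 0 < Real.sin θk := Real.sin_pos_of_pos_of_lt_pi hθk0 hθkπ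
  have hkmem : k ∈ Finset.Icc 1 n := Finset.mem_Icc.mpr ⟨hk1, hk2⟩
  set F : ℝ → ℝ := fun θ => ∏ j ∈ (Finset.Icc 1 n).erase k,
      (Real.cos θ - Real.cos (j * π / (n + 1))) with hFdef
  have hFcont : Continuous F := by
    apply continuous_finset_prod
    intro j _
    exact Real.continuous_cos.sub continuous_const
  have htendF : Tendsto F (𝓝[≠] θk) (𝓝 (F θk)) :=
    (hFcont.tendsto θk).mono_left nhdsWithin_le_nhds
  have hsinkpi : Real.sin (((n:ℝ)+1) * θk) = 0 := by
    have h : ((n:ℝ)+1) * θk = (k:ℝ) * π := by rw [hθkdef]; field_simp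
    rw [h, Real.sin_nat_mul_pi]
  have hcoskpi : Real.cos (((n:ℝ)+1) * θk) = (-1)^k := by
    have h : ((n:ℝ)+1) * θk = (k:ℝ) * π - 0 := by rw [hθkdef]; field_simp; ring
    rw [h, Real.cos_nat_mul_pi_sub, Real.cos_zero, mul_one]
  have hd : HasDerivAt (fun θ : ℝ => Real.sin (((n:ℝ)+1) * θ)) (((n:ℝ)+1) * (-1)^k) θk := by
    have h := (Real.hasDerivAt_sin (((n:ℝ)+1) * θk)).comp θk
      ((hasDerivAt_id θk).const_mul ((n:ℝ)+1))
    have h2 : Real.cos (((n:ℝ)+1) * θk) * (((n:ℝ)+1) * 1) = ((n:ℝ)+1) * (-1)^k := by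
      rw [hcoskpi]; ring
    rw [h2] at h
    exact h
  have hA : Tendsto (slope (fun θ : ℝ => Real.sin (((n:ℝ)+1) * θ)) θk) (𝓝[≠] θk)
      (𝓝 (((n:ℝ)+1) * (-1)^k)) := hasDerivAt_iff_tendsto_slope.mp hd
  have hB : Tendsto (slope Real.cos θk) (𝓝[≠] θk) (𝓝 (-Real.sin θk)) :=
    hasDerivAt_iff_tendsto_slope.mp (Real.hasDerivAt_cos θk)
  have hBne : -Real.sin θk ≠ 0 := by
    simp only [ne_eq, neg_eq_zero]
    exact ne_of_gt hsθk
  have hAB := hA.div hB hBne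
  have hratio : ∀ᶠ θ in 𝓝[≠] θk,
      slope (fun θ : ℝ => Real.sin (((n:ℝ)+1) * θ)) θk θ / slope Real.cos θk θ
        = Real.sin (((n:ℝ)+1) * θ) / (Real.cos θ - Real.cos θk) := by
    filter_upwards [self_mem_nhdsWithin] with θ hθ
    have hd0 : θ - θk ≠ 0 := sub_ne_zero.mpr hθ
    rw [slope_def_field, slope_def_field, hsinkpi, sub_zero, quot_helper _ _ _ hd0]
  have htendQ : Tendsto (fun θ => Real.sin (((n:ℝ)+1) * θ) / (Real.cos θ - Real.cos θk))
      (𝓝[≠] θk) (𝓝 (((n:ℝ)+1) * (-1)^k / (-Real.sin θk))) := hAB.congr' hratio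
  have hinvne : (2:ℝ)^n * Real.sin θk ≠ 0 := by positivity
  have hinv : Tendsto (fun θ : ℝ => ((2:ℝ)^n * Real.sin θ)⁻¹) (𝓝[≠] θk)
      (𝓝 (((2:ℝ)^n * Real.sin θk)⁻¹)) :=
    (((continuous_const.mul Real.continuous_sin).tendsto θk).mono_left
      nhdsWithin_le_nhds).inv₀ hinvne
  have htendG := htendQ.mul hinv
  have hFG : ∀ᶠ θ in 𝓝[≠] θk, F θ
      = Real.sin (((n:ℝ)+1) * θ) / (Real.cos θ - Real.cos θk) * ((2:ℝ)^n * Real.sin θ)⁻¹ := by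
    have hmem : ∀ᶠ θ in 𝓝[≠] θk, θ ∈ Set.Ioo 0 π :=
      eventually_nhdsWithin_of_eventually_nhds (isOpen_Ioo.eventually_mem ⟨hθk0, hθkπ⟩)
    filter_upwards [hmem, self_mem_nhdsWithin] with θ hθ hθne
    have hsθ : 0 < Real.sin θ := Real.sin_pos_of_pos_of_lt_pi hθ.1 hθ.2
    have hcosne : Real.cos θ - Real.cos θk ≠ 0 := by
      refine sub_ne_zero.mpr (fun h => hθne ?_)
      exact Real.injOn_cos ⟨hθ.1.le, hθ.2.le⟩ ⟨hθk0.le, hθkπ.le⟩ h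
    have full := prodB (n+1) (by omega) θ
    push_cast at full
    rw [← Finset.prod_erase_mul _ _ hkmem, ← hθkdef] at full
    have hs' : Real.sin θ ≠ 0 := ne_of_gt hsθ
    have h2 : (2:ℝ)^n ≠ 0 := by positivity
    show (∏ j ∈ (Finset.Icc 1 n).erase k,
        (Real.cos θ - Real.cos (j * π / ((n:ℝ) + 1)))) = _
    rw [← full, eq_comm, mul_inv_eq_iff_eq_mul₀ (mul_ne_zero h2 hs'), div_eq_iff hcosne]
    ring
  have hFG' : (fun θ => Real.sin (((n:ℝ)+1) * θ) / (Real.cos θ - Real.cos θk)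
      * ((2:ℝ)^n * Real.sin θ)⁻¹) =ᶠ[𝓝[≠] θk] F := hFG.mono fun θ h => h.symm
  have hval : F θk = ((n:ℝ)+1) * (-1)^k / (-Real.sin θk) * ((2:ℝ)^n * Real.sin θk)⁻¹ :=
    tendsto_nhds_unique htendF (Filter.Tendsto.congr' hFG' htendG)
  have hFk : F θk = ∏ j ∈ (Finset.Icc 1 n).erase k,
      (Real.cos θk - Real.cos (j * π / ((n:ℝ) + 1))) := rfl
  rw [← hFk, hval]
  have h2n : (2:ℝ)^n ≠ 0 := by positivity
  have hs0 : Real.sin θk ≠ 0 := ne_of_gt hsθk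
  field_simp
  ring

lemma numF (n k : ℕ) (hn : 2 ≤ n) (hk1 : 1 ≤ k) (hk2 : k ≤ n) :
    (∏ j ∈ Finset.Icc 1 (n-1), (Real.cos (k * π / (n + 1)) - Real.cos (j * π / n)))
      = (-1)^(k+1) / 2^(n-1) := by
  have hπ := Real.pi_pos
  set θk : ℝ := k * π / (n + 1) with hθkdef
  have hn1 : (0:ℝ) < (n:ℝ) + 1 := by positivity
  have hθk0 : 0 < θk := by
    apply div_pos _ hn1
    have : (0:ℝ) < (k:ℝ) := by exact_mod_cast hk1
    positivity
  have hθkπ : θk < π := by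
    rw [hθkdef, div_lt_iff₀ hn1]
    have : (k:ℝ) ≤ (n:ℝ) := by exact_mod_cast hk2
    nlinarith
  have hsθk : 0 < Real.sin θk := Real.sin_pos_of_pos_of_lt_pi hθk0 hθkπ
  have hs0 : Real.sin θk ≠ 0 := ne_of_gt hsθk
  have full := prodB n (by omega) θk
  have hnθ : (n:ℝ) * θk = (k:ℝ) * π - θk := by
    rw [hθkdef]; field_simp; ring
  rw [hnθ, Real.sin_nat_mul_pi_sub] at full
  have h2 : (2:ℝ)^(n-1) ≠ 0 := by positivity
  rw [eq_div_iff h2]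
  apply mul_right_cancel₀ hs0
  linear_combination full

theorem stmt13 (n k : ℕ) (hn : 2 ≤ n) (hk1 : 1 ≤ k) (hk2 : k ≤ n) :
    (2 / (n + 1)) * Real.sin (k * π / (n + 1)) ^ 2 =
      (∏ j ∈ Finset.Icc 1 (n - 1), (Real.cos (k * π / (n + 1)) - Real.cos (j * π / n))) /
      (∏ j ∈ (Finset.Icc 1 n).erase k,
        (Real.cos (k * π / (n + 1)) - Real.cos (j * π / (n + 1)))) := by
  have hπ := Real.pi_pos
  rw [numF n k hn hk1 hk2, denomF n k hn hk1 hk2]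
  set θk : ℝ := k * π / (n + 1) with hθkdef
  have hn1 : (0:ℝ) < (n:ℝ) + 1 := by positivity
  have hθk0 : 0 < θk := by
    apply div_pos _ hn1
    have : (0:ℝ) < (k:ℝ) := by exact_mod_cast hk1
    positivity
  have hθkπ : θk < π := by
    rw [hθkdef, div_lt_iff₀ hn1]
    have : (k:ℝ) ≤ (n:ℝ) := by exact_mod_cast hk2
    nlinarith
  have hsθk : 0 < Real.sin θk := Real.sin_pos_of_pos_of_lt_pi hθk0 hθkπ
  have hs0 : Real.sin θk ≠ 0 := ne_of_gt hsθk
  have h2a : (2:ℝ)^(n-1) ≠ 0 := by positivity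
  have h2b : (2:ℝ)^n ≠ 0 := by positivity
  have hneg : ((-1:ℝ))^(k+1) ≠ 0 := by
    apply pow_ne_zero; norm_num
  have h2n : (2:ℝ)^n = 2 * 2^(n-1) := by
    rw [← pow_succ']
    congr 1
    omega
  rw [div_div_div_eq]
  rw [h2n]
  field_simp
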